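/- Let Shifts : Monomials → Finset(ℤ^ℰ) assign to each operator its set of shifts, with a map f : ℤ^ℰ → ℤ^k into a lexicographically ordered ℤ^k and minimal shifts defined as shifts x minimizing f(x). Suppose M₁ and M₂ are operators whose shift sets combine additively (every shift of M₁M₂ is a sum x₁+x₂ of shifts, with coefficient given by the product of coefficients summed over all decompositions), and suppose that f(x) ≤ 0 for every minimal shift x of M₁ or M₂. If M₁ has a unique minimal shift, then the minimal shifts of M₁M₂ are exactly the sums y₁+y₂ of minimal shifts y₁ of M₁ and y₂ of M₂, and each such sum arises from a unique decomposition. -/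

import Mathlib

/-- `x` is a minimal shift of the operator `M` with respect to `f`, with `ℤ^k`
lexicographically ordered: `x` is a shift (i.e. lies in the support of `M`) and
`f x` is lexicographically minimal among `f` of all shifts of `M`. -/
def IsMinShift {E : Type} {k : ℕ} {R : Type} [CommRing R]
    (f : (E → ℤ) →+ (Fin k → ℤ)) (M : AddMonoidAlgebra R (E → ℤ)) (x : E → ℤ) : Prop :=
  x ∈ M.coeff.support ∧ ∀ y ∈ M.coeff.support, toLex (f x) ≤ toLex (f y)

private lemma aux_eq {α : Type*} [AddCommMonoid α] [PartialOrder α] [IsOrderedCancelAddMonoid α] {a b c d : α}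
    (h1 : c ≤ a) (h2 : d ≤ b) (h : a + b = c + d) : a = c ∧ b = d := by
  have ha : a ≤ c := by
    have : a + b ≤ c + b := h.le.trans (add_le_add_right h2 c)
    exact le_of_add_le_add_right this
  have hb : b ≤ d := by
    have : a + b ≤ a + d := h.le.trans (add_le_add_left h1 d)
    exact le_of_add_le_add_left this
  exact ⟨le_antisymm ha h1, le_antisymm hb h2⟩

theorem stmt11 {E : Type} {k : ℕ} {R : Type} [CommRing R] [IsDomain R]
    (f : (E → ℤ) →+ (Fin k → ℤ))
    (M₁ M₂ : AddMonoidAlgebra R (E → ℤ))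
    (hneg : ∀ x, (IsMinShift f M₁ x ∨ IsMinShift f M₂ x) →
      toLex (f x) ≤ toLex (0 : Fin k → ℤ))
    (y₁ : E → ℤ) (hy₁ : IsMinShift f M₁ y₁)
    (huniq : ∀ x, IsMinShift f M₁ x → x = y₁) :
    (∀ x, IsMinShift f (M₁ * M₂) x ↔ ∃ y₂, IsMinShift f M₂ y₂ ∧ x = y₁ + y₂) ∧
    (∀ y₂, IsMinShift f M₂ y₂ →
      ∀ x₁ ∈ M₁.coeff.support, ∀ x₂ ∈ M₂.coeff.support,
        x₁ + x₂ = y₁ + y₂ → x₁ = y₁ ∧ x₂ = y₂) := by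
  classical
  have key : ∀ y₂, IsMinShift f M₂ y₂ →
      ∀ x₁ ∈ M₁.coeff.support, ∀ x₂ ∈ M₂.coeff.support,
        x₁ + x₂ = y₁ + y₂ → x₁ = y₁ ∧ x₂ = y₂ := by
    intro y₂ hy₂ x₁ hx₁ x₂ hx₂ hsum
    have h1 : toLex (f y₁) ≤ toLex (f x₁) := hy₁.2 _ hx₁
    have h2 : toLex (f y₂) ≤ toLex (f x₂) := hy₂.2 _ hx₂
    have hadd : toLex (f x₁) + toLex (f x₂) = toLex (f y₁) + toLex (f y₂) := by
      have := congrArg (fun z => toLex (f z)) hsum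
      simpa [map_add] using this
    obtain ⟨he1, he2⟩ := aux_eq h1 h2 hadd
    have hx₁eq : x₁ = y₁ := huniq x₁ ⟨hx₁, fun y hy => he1 ▸ hy₁.2 y hy⟩
    refine ⟨hx₁eq, ?_⟩
    rw [hx₁eq] at hsum
    exact add_left_cancel hsum
  refine ⟨?_, key⟩
  intro x
  constructor
  · rintro ⟨hxsupp, hxmin⟩
    -- x ∈ support of product, so x = x₁ + x₂
    obtain ⟨x₁, hx₁, x₂, hx₂, rfl⟩ := Finset.mem_add.1
      (AddMonoidAlgebra.support_coeff_mul_subset M₁ M₂ hxsupp)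
    -- M₂ has nonempty support, pick a minimal shift y₂
    have htri : IsTrichotomous (Lex (Fin k → ℤ)) (· < ·) :=
      Pi.isTrichotomous_lex _ _ (IsWellFounded.wf)
    obtain ⟨y₂, hy₂s, hy₂min'⟩ : ∃ m ∈ M₂.coeff.support.image (fun z => toLex (f z)),
        ∀ x ∈ M₂.coeff.support.image (fun z => toLex (f z)), ¬ x < m := by
      obtain ⟨m, hm⟩ := Finset.exists_minimal (s := M₂.coeff.support.image fun z => toLex (f z))
        ⟨_, Finset.mem_image_of_mem _ hx₂⟩
      exact ⟨m, hm.1, fun x hx hlt => hlt.not_ge (hm.2 hx hlt.le)⟩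
    obtain ⟨y₂', hy₂'s, hy₂'eq⟩ := Finset.mem_image.1 hy₂s
    have hy₂min : ∀ y ∈ M₂.coeff.support, toLex (f y₂') ≤ toLex (f y) := by
      intro y hy
      rcases @trichotomous _ (· < ·) htri (toLex (f y₂')) (toLex (f y)) with h | h | h
      · exact h.le
      · exact h.le
      · exact absurd (hy₂'eq ▸ h) (hy₂min' _ (Finset.mem_image_of_mem _ hy))
    clear hy₂min' hy₂s hy₂'eq
    rename' y₂' => y₂, hy₂'s => hy₂s
    have hy₂ : IsMinShift f M₂ y₂ := ⟨hy₂s, hy₂min⟩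
    -- y₁ + y₂ is in the support of the product
    have hcoeff : (M₁ * M₂).coeff (y₁ + y₂) = M₁.coeff y₁ * M₂.coeff y₂ := by
      rw [AddMonoidAlgebra.coeff_mul]
      rw [Finsupp.sum]
      rw [Finset.sum_eq_single y₁]
      · rw [Finsupp.sum, Finset.sum_eq_single y₂]
        · simp
        · intro b hb hbne
          rw [if_neg]
          intro hc
          exact hbne ((key y₂ hy₂ y₁ hy₁.1 b hb hc).2)
        · intro h; simp [Finsupp.notMem_support_iff.1 h]
      · intro a ha hane
        rw [Finsupp.sum]
        apply Finset.sum_eq_zero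
        intro b hb
        rw [if_neg]
        intro hc
        exact hane ((key y₂ hy₂ a ha b hb hc).1)
      · intro h
        simp [Finsupp.notMem_support_iff.1 h]
    have hsuppprod : y₁ + y₂ ∈ (M₁ * M₂).coeff.support := by
      rw [Finsupp.mem_support_iff, hcoeff]
      exact mul_ne_zero (Finsupp.mem_support_iff.1 hy₁.1) (Finsupp.mem_support_iff.1 hy₂s)
    -- minimality both ways forces equality
    have hle : toLex (f (x₁ + x₂)) ≤ toLex (f (y₁ + y₂)) := hxmin _ hsuppprod
    have hge1 : toLex (f y₁) ≤ toLex (f x₁) := hy₁.2 _ hx₁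
    have hge2 : toLex (f y₂) ≤ toLex (f x₂) := hy₂min _ hx₂
    have hadd : toLex (f x₁) + toLex (f x₂) = toLex (f y₁) + toLex (f y₂) := by
      refine le_antisymm ?_ (add_le_add hge1 hge2)
      calc toLex (f x₁) + toLex (f x₂) = toLex (f (x₁ + x₂)) := by simp [map_add]
        _ ≤ toLex (f (y₁ + y₂)) := hle
        _ = toLex (f y₁) + toLex (f y₂) := by simp [map_add]
    obtain ⟨he1, he2⟩ := aux_eq hge1 hge2 hadd
    have hx₁eq : x₁ = y₁ := huniq x₁ ⟨hx₁, fun y hy => he1 ▸ hy₁.2 y hy⟩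
    refine ⟨x₂, ⟨hx₂, fun y hy => he2 ▸ hy₂min y hy⟩, by rw [hx₁eq]⟩
  · rintro ⟨y₂, hy₂, rfl⟩
    have hcoeff : (M₁ * M₂).coeff (y₁ + y₂) = M₁.coeff y₁ * M₂.coeff y₂ := by
      rw [AddMonoidAlgebra.coeff_mul]
      rw [Finsupp.sum]
      rw [Finset.sum_eq_single y₁]
      · rw [Finsupp.sum, Finset.sum_eq_single y₂]
        · simp
        · intro b hb hbne
          rw [if_neg]
          intro hc
          exact hbne ((key y₂ hy₂ y₁ hy₁.1 b hb hc).2)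
        · intro h; simp [Finsupp.notMem_support_iff.1 h]
      · intro a ha hane
        rw [Finsupp.sum]
        apply Finset.sum_eq_zero
        intro b hb
        rw [if_neg]
        intro hc
        exact hane ((key y₂ hy₂ a ha b hb hc).1)
      · intro h
        simp [Finsupp.notMem_support_iff.1 h]
    refine ⟨?_, ?_⟩
    · rw [Finsupp.mem_support_iff, hcoeff]
      exact mul_ne_zero (Finsupp.mem_support_iff.1 hy₁.1) (Finsupp.mem_support_iff.1 hy₂.1)
    · intro y hy
      obtain ⟨x₁, hx₁, x₂, hx₂, rfl⟩ := Finset.mem_add.1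
        (AddMonoidAlgebra.support_coeff_mul_subset M₁ M₂ hy)
      have : toLex (f y₁) + toLex (f y₂) ≤ toLex (f x₁) + toLex (f x₂) :=
        add_le_add (hy₁.2 _ hx₁) (hy₂.2 _ hx₂)
      calc toLex (f (y₁ + y₂)) = toLex (f y₁) + toLex (f y₂) := by simp [map_add]
        _ ≤ toLex (f x₁) + toLex (f x₂) := this
        _ = toLex (f (x₁ + x₂)) := by simp [map_add]
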